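/- arXiv:2601.06957 — 3 statements merged into one kernel-verified Lean document; each statement's English description precedes it below -/
import Mathlib

section
/- For every ξ = (ξ₁, ξ₂) ∈ ℝ² with ξ ≠ 0 and each sign ε ∈ {+1, −1}, the eigenspace of 𝒜(ξ) for the eigenvalue ε|ξ| equals the set of x = (M₁, M₂, U₁₁, U₁₂, U₂₁, U₂₂, H, N₁, N₂) ∈ ℝ⁹ such that N₁ = N₂ = 0, |ξ| U_{AB} = ε (ξ_A M_B − ξ_B M_A) for A, B ∈ {1,2}, and |ξ| H = ε Σ_{A=1,2} ξ_A M_A; this eigenspace is 2-dimensional (parametrized freely by (M₁, M₂)). -/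
/-- The principal symbol `𝒜(ξ)` of the constraint-propagation system, acting on
`ℝ⁹` with coordinates `(M₁, M₂, U₁₁, U₁₂, U₂₁, U₂₂, H, N₁, N₂)`
(indexed `0, 1, 2, 3, 4, 5, 6, 7, 8`). -/
def constraintSymbol (ξ₁ ξ₂ : ℝ) : Matrix (Fin 9) (Fin 9) ℝ :=
  !![0, 0, -ξ₁, -ξ₂, 0, 0, ξ₁, 0, 0;
     0, 0, 0, 0, -ξ₁, -ξ₂, ξ₂, 0, 0;
     0, 0, 0, 0, 0, 0, 0, 0, 0;
     -ξ₂, ξ₁, 0, 0, 0, 0, 0, 0, 0;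
     ξ₂, -ξ₁, 0, 0, 0, 0, 0, 0, 0;
     0, 0, 0, 0, 0, 0, 0, 0, 0;
     ξ₁, ξ₂, 0, 0, 0, 0, 0, 0, 0;
     0, 0, 0, 0, 0, 0, 0, 0, 0;
     0, 0, 0, 0, 0, 0, 0, 0, 0]

private lemma constraintSymbol_mulVec (ξ₁ ξ₂ : ℝ) (x : Fin 9 → ℝ) :
    (constraintSymbol ξ₁ ξ₂).mulVec x =
    ![-ξ₁*x 2 - ξ₂*x 3 + ξ₁*x 6, -ξ₁*x 4 - ξ₂*x 5 + ξ₂*x 6, 0,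
      -ξ₂*x 0 + ξ₁*x 1, ξ₂*x 0 - ξ₁*x 1, 0, ξ₁*x 0 + ξ₂*x 1, 0, 0] := by
  have hx : x = ![x 0, x 1, x 2, x 3, x 4, x 5, x 6, x 7, x 8] := by
    funext i; fin_cases i <;> rfl
  rw [hx]
  simp only [constraintSymbol, Matrix.cons_mulVec, Matrix.cons_dotProduct,
    Matrix.head_cons, Matrix.tail_cons, Matrix.dotProduct_of_isEmpty,
    Matrix.empty_mulVec]
  rw [← hx]
  simp only [Fin.cons_inj, Matrix.vecCons]
  norm_num
  repeat' constructor <;> ring_nf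
  exact ⟨trivial, trivial⟩

/-- For `ξ ≠ 0` and sign `ε = ±1`, the eigenspace of `𝒜(ξ)` for
the eigenvalue `ε|ξ|` is `{x : N₁ = N₂ = 0, |ξ| U_{AB} = ε(ξ_A M_B − ξ_B M_A),
|ξ| H = ε Σ_A ξ_A M_A}`, which is 2-dimensional. -/
theorem constraintSymbol_nonzero_eigenspaces (ξ₁ ξ₂ : ℝ) (hξ : (ξ₁, ξ₂) ≠ (0, 0))
    (ε : ℝ) (hε : ε = 1 ∨ ε = -1)
    (ν : ℝ) (hν : ν = Real.sqrt (ξ₁ ^ 2 + ξ₂ ^ 2)) :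
    (∀ x : Fin 9 → ℝ,
      x ∈ Module.End.eigenspace (constraintSymbol ξ₁ ξ₂).mulVecLin (ε * ν) ↔
        (x 7 = 0 ∧ x 8 = 0 ∧
          ν * x 2 = ε * (ξ₁ * x 0 - ξ₁ * x 0) ∧
          ν * x 3 = ε * (ξ₁ * x 1 - ξ₂ * x 0) ∧
          ν * x 4 = ε * (ξ₂ * x 0 - ξ₁ * x 1) ∧
          ν * x 5 = ε * (ξ₂ * x 1 - ξ₂ * x 1) ∧
          ν * x 6 = ε * (ξ₁ * x 0 + ξ₂ * x 1))) ∧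
    Module.finrank ℝ
      (Module.End.eigenspace (constraintSymbol ξ₁ ξ₂).mulVecLin (ε * ν)) = 2 := by
  have hne : ξ₁ ≠ 0 ∨ ξ₂ ≠ 0 := by
    by_contra hc
    push_neg at hc
    exact hξ (by simp [hc.1, hc.2])
  have hpos : (0:ℝ) < ξ₁ ^ 2 + ξ₂ ^ 2 := by
    rcases hne with h | h
    · have := (sq_nonneg ξ₁).lt_of_ne (Ne.symm (pow_ne_zero 2 h))
      nlinarith [sq_nonneg ξ₂]
    · have := (sq_nonneg ξ₂).lt_of_ne (Ne.symm (pow_ne_zero 2 h))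
      nlinarith [sq_nonneg ξ₁]
  have hν0 : 0 < ν := by rw [hν]; exact Real.sqrt_pos.mpr hpos
  have hνne : ν ≠ 0 := hν0.ne'
  have hν2 : ν ^ 2 = ξ₁ ^ 2 + ξ₂ ^ 2 := by rw [hν]; exact Real.sq_sqrt hpos.le
  have hε2 : ε * ε = 1 := by rcases hε with h | h <;> rw [h] <;> norm_num
  have hεne : ε ≠ 0 := by rcases hε with h | h <;> rw [h] <;> norm_num
  have hεν : ε * ν ≠ 0 := mul_ne_zero hεne hνne
  have hmem : ∀ x : Fin 9 → ℝ,
      x ∈ Module.End.eigenspace (constraintSymbol ξ₁ ξ₂).mulVecLin (ε * ν) ↔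
        (x 7 = 0 ∧ x 8 = 0 ∧
          ν * x 2 = ε * (ξ₁ * x 0 - ξ₁ * x 0) ∧
          ν * x 3 = ε * (ξ₁ * x 1 - ξ₂ * x 0) ∧
          ν * x 4 = ε * (ξ₂ * x 0 - ξ₁ * x 1) ∧
          ν * x 5 = ε * (ξ₂ * x 1 - ξ₂ * x 1) ∧
          ν * x 6 = ε * (ξ₁ * x 0 + ξ₂ * x 1)) := by
    intro x
    rw [Module.End.mem_eigenspace_iff, Matrix.mulVecLin_apply,
      constraintSymbol_mulVec]
    constructor
    · intro h
      have h2 : (0:ℝ) = ε * ν * x 2 := congrFun h 2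
      have h3 : -ξ₂ * x 0 + ξ₁ * x 1 = ε * ν * x 3 := congrFun h 3
      have h4 : ξ₂ * x 0 - ξ₁ * x 1 = ε * ν * x 4 := congrFun h 4
      have h5 : (0:ℝ) = ε * ν * x 5 := congrFun h 5
      have h6 : ξ₁ * x 0 + ξ₂ * x 1 = ε * ν * x 6 := congrFun h 6
      have h7 : (0:ℝ) = ε * ν * x 7 := congrFun h 7
      have h8 : (0:ℝ) = ε * ν * x 8 := congrFun h 8
      refine ⟨?_, ?_, ?_, ?_, ?_, ?_, ?_⟩
      · rcases mul_eq_zero.mp h7.symm with hh | hh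
        · exact absurd hh hεν
        · exact hh
      · rcases mul_eq_zero.mp h8.symm with hh | hh
        · exact absurd hh hεν
        · exact hh
      · linear_combination (-ε) * h2 + (-(ν * x 2)) * hε2
      · linear_combination (-ε) * h3 + (-(ν * x 3)) * hε2
      · linear_combination (-ε) * h4 + (-(ν * x 4)) * hε2
      · linear_combination (-ε) * h5 + (-(ν * x 5)) * hε2
      · linear_combination (-ε) * h6 + (-(ν * x 6)) * hε2
    · rintro ⟨h7, h8, h2, h3, h4, h5, h6⟩
      funext i
      fin_cases i
      · show -ξ₁ * x 2 - ξ₂ * x 3 + ξ₁ * x 6 = ε * ν * x 0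
        apply mul_left_cancel₀ hνne
        linear_combination (-ξ₁) * h2 + (-ξ₂) * h3 + ξ₁ * h6 - (ε * x 0) * hν2
      · show -ξ₁ * x 4 - ξ₂ * x 5 + ξ₂ * x 6 = ε * ν * x 1
        apply mul_left_cancel₀ hνne
        linear_combination (-ξ₁) * h4 + (-ξ₂) * h5 + ξ₂ * h6 - (ε * x 1) * hν2
      · show (0:ℝ) = ε * ν * x 2
        linear_combination (-ε) * h2
      · show -ξ₂ * x 0 + ξ₁ * x 1 = ε * ν * x 3
        linear_combination (-ε) * h3 - (ξ₁ * x 1 - ξ₂ * x 0) * hε2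
      · show ξ₂ * x 0 - ξ₁ * x 1 = ε * ν * x 4
        linear_combination (-ε) * h4 - (ξ₂ * x 0 - ξ₁ * x 1) * hε2
      · show (0:ℝ) = ε * ν * x 5
        linear_combination (-ε) * h5
      · show ξ₁ * x 0 + ξ₂ * x 1 = ε * ν * x 6
        linear_combination (-ε) * h6 - (ξ₁ * x 0 + ξ₂ * x 1) * hε2
      · show (0:ℝ) = ε * ν * x 7
        rw [h7]; ring
      · show (0:ℝ) = ε * ν * x 8
        rw [h8]; ring
  refine ⟨hmem, ?_⟩
  have hEspan : Module.End.eigenspace (constraintSymbol ξ₁ ξ₂).mulVecLin (ε * ν)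
      = Submodule.span ℝ (Set.range
          ![![ν, 0, 0, -(ε*ξ₂), ε*ξ₂, 0, ε*ξ₁, 0, 0],
            ![0, ν, 0, ε*ξ₁, -(ε*ξ₁), 0, ε*ξ₂, 0, 0]]) := by
    apply le_antisymm
    · intro x hx
      rw [hmem] at hx
      obtain ⟨h7, h8, h2, h3, h4, h5, h6⟩ := hx
      have hsm : ν • x = x 0 • ![ν, 0, 0, -(ε*ξ₂), ε*ξ₂, 0, ε*ξ₁, 0, 0]
          + x 1 • ![0, ν, 0, ε*ξ₁, -(ε*ξ₁), 0, ε*ξ₂, 0, 0] := by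
        funext i
        fin_cases i
        · show ν * x 0 = x 0 * ν + x 1 * 0; ring
        · show ν * x 1 = x 0 * 0 + x 1 * ν; ring
        · show ν * x 2 = x 0 * 0 + x 1 * 0
          linear_combination h2
        · show ν * x 3 = x 0 * (-(ε*ξ₂)) + x 1 * (ε*ξ₁)
          linear_combination h3
        · show ν * x 4 = x 0 * (ε*ξ₂) + x 1 * (-(ε*ξ₁))
          linear_combination h4
        · show ν * x 5 = x 0 * 0 + x 1 * 0
          linear_combination h5
        · show ν * x 6 = x 0 * (ε*ξ₁) + x 1 * (ε*ξ₂)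
          linear_combination h6
        · show ν * x 7 = x 0 * 0 + x 1 * 0
          rw [h7]; ring
        · show ν * x 8 = x 0 * 0 + x 1 * 0
          rw [h8]; ring
      have hx' : x = ν⁻¹ • (ν • x) := by
        rw [smul_smul, inv_mul_cancel₀ hνne, one_smul]
      rw [hx', hsm]
      refine Submodule.smul_mem _ _ (Submodule.add_mem _
        (Submodule.smul_mem _ _ (Submodule.subset_span ⟨0, rfl⟩))
        (Submodule.smul_mem _ _ (Submodule.subset_span ⟨1, rfl⟩)))
    · rw [Submodule.span_le]
      rintro y ⟨i, rfl⟩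
      fin_cases i
      · show ![ν, 0, 0, -(ε*ξ₂), ε*ξ₂, 0, ε*ξ₁, 0, 0] ∈ _
        rw [SetLike.mem_coe, hmem]
        refine ⟨rfl, rfl, ?_, ?_, ?_, ?_, ?_⟩
        · show ν * 0 = ε * (ξ₁ * ν - ξ₁ * ν); ring
        · show ν * (-(ε*ξ₂)) = ε * (ξ₁ * 0 - ξ₂ * ν); ring
        · show ν * (ε*ξ₂) = ε * (ξ₂ * ν - ξ₁ * 0); ring
        · show ν * 0 = ε * (ξ₂ * 0 - ξ₂ * 0); ring
        · show ν * (ε*ξ₁) = ε * (ξ₁ * ν + ξ₂ * 0); ring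
      · show ![0, ν, 0, ε*ξ₁, -(ε*ξ₁), 0, ε*ξ₂, 0, 0] ∈ _
        rw [SetLike.mem_coe, hmem]
        refine ⟨rfl, rfl, ?_, ?_, ?_, ?_, ?_⟩
        · show ν * 0 = ε * (ξ₁ * 0 - ξ₁ * 0); ring
        · show ν * (ε*ξ₁) = ε * (ξ₁ * ν - ξ₂ * 0); ring
        · show ν * (-(ε*ξ₁)) = ε * (ξ₂ * 0 - ξ₁ * ν); ring
        · show ν * 0 = ε * (ξ₂ * ν - ξ₂ * ν); ring
        · show ν * (ε*ξ₂) = ε * (ξ₁ * 0 + ξ₂ * ν); ring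
  rw [hEspan]
  have hli : LinearIndependent ℝ
      ![![ν, 0, 0, -(ε*ξ₂), ε*ξ₂, 0, ε*ξ₁, 0, 0],
        ![0, ν, 0, ε*ξ₁, -(ε*ξ₁), 0, ε*ξ₂, 0, 0]] := by
    rw [linearIndependent_fin2]
    constructor
    · intro h
      have : ν = (0:ℝ) := congrFun h 1
      exact hνne this
    · intro a h
      have : a * 0 = ν := congrFun h 0
      exact hνne (by linarith)
  rw [finrank_span_eq_card hli]
  simp
end

section
/- Let t₀ < 0, 0 < p ≤ 1 and C₀ ≥ 0. Let y : [t₀, 0) → ℝ be differentiable and z : [t₀, 0) → [0, ∞) be continuous, and suppose y′(t) ≤ C₀ (−t)^{p−1} y(t) − (−t)^{−1} z(t) for all t ∈ [t₀, 0). Then for all t ∈ [t₀, 0): y(t) + ∫_{t₀}^{t} (−τ)^{−1} z(τ) dτ ≤ exp( C₀ ((−t₀)^p − (−t)^p) / p ) · y(t₀). -/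
open Real Set

/-- Singular-weight Gronwall-type energy inequality: if
`y′(t) ≤ C₀ (−t)^{p−1} y(t) − (−t)⁻¹ z(t)` on `[t₀, 0)` with `z ≥ 0`
continuous, then
`y(t) + ∫_{t₀}^t (−τ)⁻¹ z(τ) dτ ≤ exp(C₀((−t₀)^p − (−t)^p)/p) y(t₀)`. -/
theorem singular_gronwall_energy (t₀ p C₀ : ℝ) (ht₀ : t₀ < 0)
    (hp0 : 0 < p) (hp1 : p ≤ 1) (hC : 0 ≤ C₀)
    (y z y' : ℝ → ℝ)
    (hy : ∀ t ∈ Ico t₀ (0 : ℝ), HasDerivAt y (y' t) t)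
    (hz : ContinuousOn z (Ico t₀ (0 : ℝ)))
    (hz0 : ∀ t ∈ Ico t₀ (0 : ℝ), 0 ≤ z t)
    (hineq : ∀ t ∈ Ico t₀ (0 : ℝ),
      y' t ≤ C₀ * (-t) ^ (p - 1) * y t - (-t)⁻¹ * z t) :
    ∀ t ∈ Ico t₀ (0 : ℝ),
      y t + ∫ τ in t₀..t, (-τ)⁻¹ * z τ
        ≤ Real.exp (C₀ * ((-t₀) ^ p - (-t) ^ p) / p) * y t₀ := by
  intro t ht
  obtain ⟨ht₀t, ht0⟩ := ht
  set μ : ℝ → ℝ := fun s => C₀ * (-s) ^ p / p with hμdef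
  -- derivative of μ
  have hμd : ∀ s : ℝ, s < 0 → HasDerivAt μ (-(C₀ * (-s) ^ (p - 1))) s := by
    intro s hs
    have h1 : HasDerivAt (fun x : ℝ => -x) (-1) s := (hasDerivAt_id s).neg
    have h2 : HasDerivAt (fun x : ℝ => x ^ p) (p * (-s) ^ (p - 1)) (-s) :=
      Real.hasDerivAt_rpow_const (Or.inl (by linarith : -s ≠ 0))
    have h3 := (h2.comp s h1).const_mul C₀ |>.div_const p
    refine h3.congr_deriv ?_
    field_simp
  -- continuity of exp ∘ μ
  have hexpμ : ∀ s : ℝ, s < 0 → ContinuousAt (fun τ => Real.exp (μ τ)) s := by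
    intro s hs
    have h1 : ContinuousAt (fun τ : ℝ => (-τ) ^ p) s :=
      (Real.continuousAt_rpow_const (-s) p (Or.inl (by linarith))).comp
        (continuous_neg.continuousAt)
    exact (Real.continuous_exp.continuousAt).comp
      (((h1.const_mul C₀).div_const p))
  -- the weight functions
  set w : ℝ → ℝ := fun τ => Real.exp (μ τ) * ((-τ)⁻¹ * z τ) with hwdef
  have hsub : Icc t₀ t ⊆ Ico t₀ (0 : ℝ) := fun s hs => ⟨hs.1, lt_of_le_of_lt hs.2 ht0⟩
  have hw_cont : ContinuousOn w (Ico t₀ (0 : ℝ)) := by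
    intro s hs
    refine ContinuousWithinAt.mul ((hexpμ s hs.2).continuousWithinAt) ?_
    exact ContinuousWithinAt.mul
      ((continuousAt_inv₀ (by linarith [hs.2] : (-s : ℝ) ≠ 0)).comp
        continuous_neg.continuousAt).continuousWithinAt (hz s hs)
  have hw0 : ∀ s ∈ Icc t₀ t, 0 ≤ (-s)⁻¹ * z s := by
    intro s hs
    have hs' := hsub hs
    have : (0:ℝ) < -s := by linarith [hs'.2]
    exact mul_nonneg (by positivity) (hz0 s hs')
  have hw_int : IntervalIntegrable w MeasureTheory.volume t₀ t := by
    apply ContinuousOn.intervalIntegrable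
    rw [uIcc_of_le ht₀t]
    exact hw_cont.mono hsub
  have hv_cont : ContinuousOn (fun τ => (-τ)⁻¹ * z τ) (Ico t₀ (0 : ℝ)) := by
    intro s hs
    exact ContinuousWithinAt.mul
      ((continuousAt_inv₀ (by linarith [hs.2] : (-s : ℝ) ≠ 0)).comp
        continuous_neg.continuousAt).continuousWithinAt (hz s hs)
  have hv_int : IntervalIntegrable (fun τ => (-τ)⁻¹ * z τ) MeasureTheory.volume t₀ t := by
    apply ContinuousOn.intervalIntegrable
    rw [uIcc_of_le ht₀t]
    exact hv_cont.mono hsub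
  -- the Lyapunov function
  set G : ℝ → ℝ := fun s => Real.exp (μ s) * y s + ∫ τ in t₀..s, w τ with hGdef
  -- G is antitone on Icc t₀ t
  have hG_deriv : ∀ s ∈ Ioo t₀ t, HasDerivAt G
      (Real.exp (μ s) * y s * (-(C₀ * (-s) ^ (p - 1))) + Real.exp (μ s) * y' s + w s) s := by
    intro s hs
    have hs0 : s < 0 := lt_of_lt_of_le hs.2 ht0.le
    have hsIco : s ∈ Ico t₀ (0 : ℝ) := ⟨hs.1.le, hs0⟩
    have h1 : HasDerivAt (fun u => Real.exp (μ u)) (Real.exp (μ s) * (-(C₀ * (-s) ^ (p - 1)))) s :=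
      (Real.hasDerivAt_exp (μ s)).comp s (hμd s hs0)
    have h2 : HasDerivAt (fun u => Real.exp (μ u) * y u)
        (Real.exp (μ s) * (-(C₀ * (-s) ^ (p - 1))) * y s + Real.exp (μ s) * y' s) s :=
      h1.mul (hy s hsIco)
    have hwint' : IntervalIntegrable w MeasureTheory.volume t₀ s := by
      apply ContinuousOn.intervalIntegrable
      rw [uIcc_of_le hs.1.le]
      exact hw_cont.mono (fun u hu => ⟨hu.1, lt_of_le_of_lt hu.2 hs0⟩)
    have hwca : ContinuousAt w s :=
      hw_cont.continuousAt (Ico_mem_nhds (by exact hs.1) hs0)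
    have hwca' : ∀ x ∈ Ioo t₀ (0:ℝ), ContinuousAt w x := fun x hx =>
      hw_cont.continuousAt (Ico_mem_nhds hx.1 hx.2)
    have h3 : HasDerivAt (fun u => ∫ τ in t₀..u, w τ) (w s) s :=
      intervalIntegral.integral_hasDerivAt_right hwint'
        (ContinuousAt.stronglyMeasurableAtFilter isOpen_Ioo hwca' s ⟨hs.1, hs0⟩) hwca
    have := h2.add h3
    refine this.congr_deriv ?_
    ring
  have hG_anti : AntitoneOn G (Icc t₀ t) := by
    apply antitoneOn_of_deriv_nonpos (convex_Icc t₀ t)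
    · -- continuity of G on Icc
      apply ContinuousOn.add
      · exact fun s hs => ((hexpμ s (hsub hs).2).continuousWithinAt).mul
          ((hy s (hsub hs)).continuousAt.continuousWithinAt)
      · have : ContinuousOn (fun x => ∫ τ in t₀..x, w τ) (uIcc t₀ t) :=
          intervalIntegral.continuousOn_primitive_interval (by
            rw [uIcc_of_le ht₀t]
            exact (hw_cont.mono hsub).integrableOn_Icc)
        rwa [uIcc_of_le ht₀t] at this
    · intro s hs
      rw [interior_Icc] at hs
      exact ((hG_deriv s hs).differentiableAt).differentiableWithinAt
    · intro s hs
      rw [interior_Icc] at hs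
      rw [(hG_deriv s hs).deriv]
      have hs0 : s < 0 := lt_of_lt_of_le hs.2 ht0.le
      have hsIco : s ∈ Ico t₀ (0 : ℝ) := ⟨hs.1.le, hs0⟩
      have hineq' := hineq s hsIco
      have hexp_pos : (0:ℝ) < Real.exp (μ s) := Real.exp_pos _
      have : Real.exp (μ s) * y' s ≤
          Real.exp (μ s) * (C₀ * (-s) ^ (p - 1) * y s - (-s)⁻¹ * z s) :=
        mul_le_mul_of_nonneg_left hineq' hexp_pos.le
      simp only [hwdef]
      nlinarith [this]
  have hGle : G t ≤ G t₀ := hG_anti ⟨le_rfl, ht₀t⟩ ⟨ht₀t, le_rfl⟩ ht₀t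
  have hGt₀ : G t₀ = Real.exp (μ t₀) * y t₀ := by
    simp [hGdef, intervalIntegral.integral_same]
  -- lower bound for the weighted integral
  have hmono_int : Real.exp (μ t) * ∫ τ in t₀..t, (-τ)⁻¹ * z τ ≤ ∫ τ in t₀..t, w τ := by
    rw [← intervalIntegral.integral_const_mul]
    apply intervalIntegral.integral_mono_on ht₀t (hv_int.const_mul _) hw_int
    intro s hs
    have hs' := hsub hs
    have hμle : μ t ≤ μ s := by
      have h1 : (-t) ^ p ≤ (-s) ^ p :=
        Real.rpow_le_rpow (by linarith [ht0] : (0:ℝ) ≤ -t) (by linarith [hs.2]) hp0.le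
      simp only [hμdef]
      gcongr
    exact mul_le_mul_of_nonneg_right (Real.exp_le_exp.mpr hμle) (hw0 s hs)
  -- combine
  have key : Real.exp (μ t) * (y t + ∫ τ in t₀..t, (-τ)⁻¹ * z τ) ≤ Real.exp (μ t₀) * y t₀ := by
    have : Real.exp (μ t) * y t + ∫ τ in t₀..t, w τ ≤ Real.exp (μ t₀) * y t₀ := by
      rw [← hGt₀]; exact hGle
    nlinarith [hmono_int]
  have hexp_pos : (0:ℝ) < Real.exp (μ t) := Real.exp_pos _
  have hfinal : y t + ∫ τ in t₀..t, (-τ)⁻¹ * z τ ≤ Real.exp (μ t₀ - μ t) * y t₀ := by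
    rw [Real.exp_sub, div_mul_eq_mul_div, le_div_iff₀ hexp_pos]
    nlinarith [key]
  convert hfinal using 2
  simp only [hμdef]
  ring
end

section
/- Let t₀ < 0, 0 < p ≤ 1, a ≥ 0 and ρ ≥ 0. Let y : [t₀, 0) → ℝ be differentiable and satisfy y′(t) ≤ ( a (−t)^{p−1} − ρ (−t)^{−1} ) y(t) for all t ∈ [t₀, 0). Then for all t ∈ [t₀, 0): y(t) ≤ exp( a ((−t₀)^p − (−t)^p) / p ) · ( (−t)/(−t₀) )^{ρ} · y(t₀). In particular, if ρ > 0 and y(t₀) ≥ 0, then y(t) → 0 with the power rate |t|^{ρ} as t → 0⁻. -/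
open Real Set

/-- Damped singular-weight Gronwall inequality: if
`y′(t) ≤ (a(−t)^{p−1} − ρ(−t)⁻¹) y(t)` on `[t₀, 0)`, then
`y(t) ≤ exp(a((−t₀)^p − (−t)^p)/p) ((−t)/(−t₀))^ρ y(t₀)`; in particular,
for `ρ > 0` and `y(t₀) ≥ 0`, `y` tends to `0` with the power rate `|t|^ρ`
as `t → 0⁻`. -/
theorem singular_gronwall_decay (t₀ p a ρ : ℝ) (ht₀ : t₀ < 0)
    (hp0 : 0 < p) (hp1 : p ≤ 1) (ha : 0 ≤ a) (hρ : 0 ≤ ρ)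
    (y y' : ℝ → ℝ)
    (hy : ∀ t ∈ Ico t₀ (0 : ℝ), HasDerivAt y (y' t) t)
    (hineq : ∀ t ∈ Ico t₀ (0 : ℝ),
      y' t ≤ (a * (-t) ^ (p - 1) - ρ * (-t)⁻¹) * y t) :
    (∀ t ∈ Ico t₀ (0 : ℝ),
      y t ≤ Real.exp (a * ((-t₀) ^ p - (-t) ^ p) / p)
              * ((-t) / (-t₀)) ^ ρ * y t₀) ∧
    (0 < ρ → 0 ≤ y t₀ →
      ∃ C : ℝ, 0 ≤ C ∧ ∀ t ∈ Ico t₀ (0 : ℝ), y t ≤ C * (-t) ^ ρ) := by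
  set g : ℝ → ℝ := fun s => a * (-s) ^ p / p - ρ * Real.log (-s) with hg_def
  set h : ℝ → ℝ := fun s => Real.exp (g s) * y s with hh_def
  -- derivative of g
  have hg : ∀ s ∈ Ico t₀ (0 : ℝ),
      HasDerivAt g (-(a * (-s) ^ (p - 1) - ρ * (-s)⁻¹)) s := by
    intro s hs
    have hs0 : -s > 0 := by simpa using hs.2
    have hne : (-s : ℝ) ≠ 0 := ne_of_gt hs0
    have h1 : HasDerivAt (fun x : ℝ => (-x) ^ p) (p * (-s) ^ (p - 1) * (-1)) s :=
      (Real.hasDerivAt_rpow_const (Or.inl hne)).comp s (hasDerivAt_neg s)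
    have h2 : HasDerivAt (fun x : ℝ => Real.log (-x)) ((-s)⁻¹ * (-1)) s :=
      (Real.hasDerivAt_log hne).comp s (hasDerivAt_neg s)
    have hsne : s ≠ 0 := by intro hc; rw [hc] at hne; simp at hne
    have h3 := ((h1.const_mul a).div_const p).sub (h2.const_mul ρ)
    refine h3.congr_deriv ?_
    field_simp
    ring
  -- derivative of h is nonpositive
  have hh : ∀ s ∈ Ico t₀ (0 : ℝ),
      HasDerivAt h (Real.exp (g s) * (-(a * (-s) ^ (p - 1) - ρ * (-s)⁻¹)) * y s
        + Real.exp (g s) * y' s) s := by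
    intro s hs
    exact ((hg s hs).exp.mul (hy s hs))
  have hhle : ∀ s ∈ Ico t₀ (0 : ℝ),
      Real.exp (g s) * (-(a * (-s) ^ (p - 1) - ρ * (-s)⁻¹)) * y s
        + Real.exp (g s) * y' s ≤ 0 := by
    intro s hs
    have h1 : y' s - (a * (-s) ^ (p - 1) - ρ * (-s)⁻¹) * y s ≤ 0 :=
      sub_nonpos.2 (hineq s hs)
    have h2 : Real.exp (g s) * (y' s - (a * (-s) ^ (p - 1) - ρ * (-s)⁻¹) * y s) ≤ 0 :=
      mul_nonpos_of_nonneg_of_nonpos (Real.exp_pos _).le h1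
    calc Real.exp (g s) * (-(a * (-s) ^ (p - 1) - ρ * (-s)⁻¹)) * y s
        + Real.exp (g s) * y' s
        = Real.exp (g s) * (y' s - (a * (-s) ^ (p - 1) - ρ * (-s)⁻¹) * y s) := by ring
      _ ≤ 0 := h2
  -- key inequality
  have key : ∀ t ∈ Ico t₀ (0 : ℝ), h t ≤ h t₀ := by
    intro t ht
    have hsub : Icc t₀ t ⊆ Ico t₀ (0 : ℝ) := fun x hx => ⟨hx.1, lt_of_le_of_lt hx.2 ht.2⟩
    have hanti : AntitoneOn h (Icc t₀ t) := by
      apply antitoneOn_of_hasDerivWithinAt_nonpos (convex_Icc t₀ t)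
        (f' := fun s => Real.exp (g s) * (-(a * (-s) ^ (p - 1) - ρ * (-s)⁻¹)) * y s
          + Real.exp (g s) * y' s)
      · intro x hx
        exact (hh x (hsub hx)).continuousAt.continuousWithinAt
      · intro x hx
        rw [interior_Icc] at hx
        exact (hh x (hsub (Ioo_subset_Icc_self hx))).hasDerivWithinAt
      · intro x hx
        rw [interior_Icc] at hx
        exact hhle x (hsub (Ioo_subset_Icc_self hx))
    exact hanti (left_mem_Icc.2 ht.1) (right_mem_Icc.2 ht.1) ht.1
  have main : ∀ t ∈ Ico t₀ (0 : ℝ),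
      y t ≤ Real.exp (a * ((-t₀) ^ p - (-t) ^ p) / p)
              * ((-t) / (-t₀)) ^ ρ * y t₀ := by
    intro t ht
    have ht0 : (0 : ℝ) < -t := by simpa using ht.2
    have ht₀0 : (0 : ℝ) < -t₀ := by linarith
    have hk := key t ht
    have h1 : y t ≤ Real.exp (g t₀ - g t) * y t₀ := by
      have h2 : Real.exp (g t) * y t ≤ Real.exp (g t) * (Real.exp (g t₀ - g t) * y t₀) := by
        rw [← mul_assoc, ← Real.exp_add]
        have : g t + (g t₀ - g t) = g t₀ := by ring
        rw [this]
        exact hk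
      exact le_of_mul_le_mul_left h2 (Real.exp_pos _)
    have heq : Real.exp (g t₀ - g t)
        = Real.exp (a * ((-t₀) ^ p - (-t) ^ p) / p) * ((-t) / (-t₀)) ^ ρ := by
      have hdivpos : (0 : ℝ) < (-t) / (-t₀) := div_pos ht0 ht₀0
      rw [Real.rpow_def_of_pos hdivpos, ← Real.exp_add]
      congr 1
      rw [Real.log_div (ne_of_gt ht0) (ne_of_gt ht₀0)]
      simp only [hg_def]
      ring
    rw [← heq]; exact h1
  refine ⟨main, fun hρ' hy0 => ?_⟩
  refine ⟨Real.exp (a * (-t₀) ^ p / p) * (-t₀) ^ (-ρ) * y t₀, ?_, ?_⟩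
  · have ht₀0 : (0 : ℝ) < -t₀ := by linarith
    positivity
  · intro t ht
    have ht0 : (0 : ℝ) < -t := by simpa using ht.2
    have ht₀0 : (0 : ℝ) < -t₀ := by linarith
    have h1 := main t ht
    have h2 : Real.exp (a * ((-t₀) ^ p - (-t) ^ p) / p) ≤ Real.exp (a * (-t₀) ^ p / p) := by
      apply Real.exp_le_exp.2
      have hposp : (0 : ℝ) ≤ (-t) ^ p := Real.rpow_nonneg ht0.le p
      have : a * ((-t₀) ^ p - (-t) ^ p) ≤ a * (-t₀) ^ p := by nlinarith
      exact div_le_div_of_nonneg_right this hp0.le |>.trans_eq rfl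
    have hdr : ((-t) / (-t₀)) ^ ρ = (-t) ^ ρ * (-t₀) ^ (-ρ) := by
      rw [Real.div_rpow ht0.le ht₀0.le, Real.rpow_neg ht₀0.le, div_eq_mul_inv]
    have hdrpos : (0 : ℝ) ≤ ((-t) / (-t₀)) ^ ρ :=
      Real.rpow_nonneg (div_pos ht0 ht₀0).le ρ
    calc y t ≤ Real.exp (a * ((-t₀) ^ p - (-t) ^ p) / p) * ((-t) / (-t₀)) ^ ρ * y t₀ := h1
      _ ≤ Real.exp (a * (-t₀) ^ p / p) * ((-t) / (-t₀)) ^ ρ * y t₀ := by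
          apply mul_le_mul_of_nonneg_right _ hy0
          exact mul_le_mul_of_nonneg_right h2 hdrpos
      _ = Real.exp (a * (-t₀) ^ p / p) * (-t₀) ^ (-ρ) * y t₀ * (-t) ^ ρ := by
          rw [hdr]; ring
end
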